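/- If C = code(H, X) for a stable hyperplane arrangement (H, X), then the polar complex Γ(C) equals the nerve of the cover {H_i⁺ ∩ X, H_i⁻ ∩ X}_{i∈[n]}, i.e. a subset F = F⁺ ⊔ F̄⁻ is a face of Γ(C) if and only if X ∩ ⋂_{i∈F⁺} H_i⁺ ∩ ⋂_{j∈F⁻} H_j⁻ ≠ ∅. -/

import Mathlib

open scoped RealInnerProductSpace

def atom {n d : ℕ} (w : Fin n → EuclideanSpace ℝ (Fin d)) (h : Fin n → ℝ)
    (X : Set (EuclideanSpace ℝ (Fin d))) (σ : Finset (Fin n)) :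
    Set (EuclideanSpace ℝ (Fin d)) :=
  {x ∈ X | ∀ i, i ∈ σ ↔ h i < ⟪w i, x⟫}

def StableArr {n d : ℕ} (w : Fin n → EuclideanSpace ℝ (Fin d)) (h : Fin n → ℝ)
    (X : Set (EuclideanSpace ℝ (Fin d))) : Prop :=
  IsOpen X ∧ Convex ℝ X ∧ (∀ i, w i ≠ 0) ∧
    ∀ σ : Finset (Fin n),
      (X ∩ ⋂ i ∈ σ, {x | ⟪w i, x⟫ = h i}).Nonempty →
        LinearIndependent ℝ (fun i : σ => w i.1)

def hcode {n d : ℕ} (w : Fin n → EuclideanSpace ℝ (Fin d)) (h : Fin n → ℝ)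
    (X : Set (EuclideanSpace ℝ (Fin d))) : Set (Finset (Fin n)) :=
  {σ | (atom w h X σ).Nonempty}

def polarFace {n : ℕ} (σ : Finset (Fin n)) : Finset (Fin n ⊕ Fin n) :=
  σ.image Sum.inl ∪ σᶜ.image Sum.inr

def polar {n : ℕ} (C : Set (Finset (Fin n))) : Set (Finset (Fin n ⊕ Fin n)) :=
  {F | ∃ σ ∈ C, F ⊆ polarFace σ}

lemma exists_inner_eq {d : ℕ} {ι : Type*} [Fintype ι]
    (w : ι → EuclideanSpace ℝ (Fin d))
    (hw : LinearIndependent ℝ w) (c : ι → ℝ) :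
    ∃ v : EuclideanSpace ℝ (Fin d), ∀ j, ⟪w j, v⟫ = c j := by
  classical
  let L : EuclideanSpace ℝ (Fin d) →ₗ[ℝ] (ι → ℝ) := LinearMap.pi fun j => innerₛₗ ℝ (w j)
  let M : (ι → ℝ) →ₗ[ℝ] EuclideanSpace ℝ (Fin d) := Fintype.linearCombination ℝ w
  have hM : ∀ f, M f = ∑ i, f i • w i := fun f => rfl
  have hL : ∀ (v) (j : ι), L v j = ⟪w j, v⟫ := fun v j => rfl
  have hinj : Function.Injective (L ∘ₗ M) := by
    rw [← LinearMap.ker_eq_bot, LinearMap.ker_eq_bot']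
    intro f hf
    have hz : ∀ j, ⟪w j, M f⟫ = 0 := by
      intro j
      have := congrFun hf j
      simpa [hL] using this
    have : ⟪M f, M f⟫ = (0:ℝ) := by
      conv_lhs => rw [hM, sum_inner]
      refine Finset.sum_eq_zero fun j _ => ?_
      rw [real_inner_smul_left, ← hM, hz j, mul_zero]
    have hMf : M f = 0 := by rwa [inner_self_eq_zero] at this
    exact funext (Fintype.linearIndependent_iff.mp hw f (by rwa [hM] at hMf))
  have hsurj : Function.Surjective (L ∘ₗ M) :=
    (LinearMap.injective_iff_surjective).mp hinj
  obtain ⟨f, hf⟩ := hsurj c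
  exact ⟨M f, fun j => by rw [← hL]; exact congrFun hf j⟩

theorem polar_eq_nerve {n d : ℕ} (w : Fin n → EuclideanSpace ℝ (Fin d))
    (h : Fin n → ℝ) (X : Set (EuclideanSpace ℝ (Fin d)))
    (hst : StableArr w h X) (Fp Fm : Finset (Fin n)) :
    (Fp.image Sum.inl ∪ Fm.image Sum.inr) ∈ polar (hcode w h X) ↔
      (X ∩ (⋂ i ∈ Fp, {x | h i < ⟪w i, x⟫}) ∩ ⋂ j ∈ Fm, {x | ⟪w j, x⟫ < h j}).Nonempty := by
  classical
  obtain ⟨hXopen, -, -, hgen⟩ := hst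
  constructor
  · rintro ⟨σ, ⟨x, hxX, hxA⟩, hsub⟩
    have hFp : ∀ i ∈ Fp, h i < ⟪w i, x⟫ := by
      intro i hi
      have hmem : Sum.inl i ∈ polarFace σ := hsub (by simp [hi])
      have hiσ : i ∈ σ := by simpa [polarFace] using hmem
      exact (hxA i).mp hiσ
    have hFm : ∀ j ∈ Fm, ⟪w j, x⟫ ≤ h j := by
      intro j hj
      have hmem : Sum.inr j ∈ polarFace σ := hsub (by simp [hj])
      have hjσ : j ∉ σ := by simpa [polarFace] using hmem
      exact le_of_not_gt fun hlt => hjσ ((hxA j).mpr hlt)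
    set T : Finset (Fin n) := Fm.filter (fun j => ⟪w j, x⟫ = h j) with hT
    have hli : LinearIndependent ℝ (fun i : T => w i.1) := by
      apply hgen
      refine ⟨x, hxX, ?_⟩
      simp only [Set.mem_iInter, Set.mem_setOf_eq]
      intro j hj
      exact (Finset.mem_filter.mp hj).2
    obtain ⟨v, hv⟩ := exists_inner_eq (fun j : T => w j.1) hli (fun _ => -1)
    have hcont : Continuous (fun t : ℝ => x + t • v) := by continuity
    have htend : Filter.Tendsto (fun t : ℝ => x + t • v) (nhds 0) (nhds x) := by
      simpa using hcont.tendsto 0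
    have hXev : ∀ᶠ t in nhds (0:ℝ), x + t • v ∈ X :=
      htend.eventually_mem (hXopen.mem_nhds hxX)
    have hic : ∀ i : Fin n,
        Filter.Tendsto (fun t : ℝ => ⟪w i, x + t • v⟫) (nhds 0) (nhds ⟪w i, x⟫) := by
      intro i
      have hci : Continuous (fun t : ℝ => ⟪w i, x + t • v⟫) :=
        Continuous.inner (continuous_const : Continuous fun _ : ℝ => w i) hcont
      simpa using hci.tendsto 0
    have hpev : ∀ᶠ t in nhds (0:ℝ), ∀ i ∈ Fp, h i < ⟪w i, x + t • v⟫ := by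
      rw [Filter.eventually_all_finset]
      intro i hi
      exact (hic i).eventually_const_lt (hFp i hi)
    have hmev : ∀ᶠ t in nhds (0:ℝ), ∀ j ∈ Fm \ T, ⟪w j, x + t • v⟫ < h j := by
      rw [Filter.eventually_all_finset]
      intro j hj
      obtain ⟨hjFm, hjT⟩ := Finset.mem_sdiff.mp hj
      have hlt : ⟪w j, x⟫ < h j := by
        refine lt_of_le_of_ne (hFm j hjFm) fun heq => hjT ?_
        exact Finset.mem_filter.mpr ⟨hjFm, heq⟩
      exact (hic j).eventually_lt_const hlt
    have hall := ((hXev.and (hpev.and hmev)).filter_mono nhdsWithin_le_nhds).and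
      (eventually_mem_nhdsWithin (s := Set.Ioi (0:ℝ)) (a := 0))
    obtain ⟨t, ⟨hXt, hpt, hmt⟩, ht0⟩ := hall.exists
    have ht0' : (0:ℝ) < t := ht0
    refine ⟨x + t • v, ⟨⟨hXt, ?_⟩, ?_⟩⟩
    · simp only [Set.mem_iInter, Set.mem_setOf_eq]
      exact hpt
    · simp only [Set.mem_iInter, Set.mem_setOf_eq]
      intro j hj
      by_cases hjT : j ∈ T
      · have heq : ⟪w j, x⟫ = h j := (Finset.mem_filter.mp hjT).2
        have hvj : ⟪w j, v⟫ = -1 := hv ⟨j, hjT⟩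
        have : ⟪w j, x + t • v⟫ = ⟪w j, x⟫ + t * ⟪w j, v⟫ := by
          rw [inner_add_right, real_inner_smul_right]
        rw [this, heq, hvj]
        linarith
      · exact hmt j (Finset.mem_sdiff.mpr ⟨hj, hjT⟩)
  · rintro ⟨x, ⟨⟨hxX, hxp⟩, hxm⟩⟩
    simp only [Set.mem_iInter, Set.mem_setOf_eq] at hxp hxm
    refine ⟨Finset.univ.filter (fun i => h i < ⟪w i, x⟫), ⟨x, hxX, fun i => by simp⟩, ?_⟩
    intro a ha
    rcases Finset.mem_union.mp ha with ha | ha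
    · obtain ⟨i, hi, rfl⟩ := Finset.mem_image.mp ha
      have : i ∈ Finset.univ.filter (fun i => h i < ⟪w i, x⟫) :=
        Finset.mem_filter.mpr ⟨Finset.mem_univ i, hxp i hi⟩
      exact Finset.mem_union_left _ (Finset.mem_image_of_mem Sum.inl this)
    · obtain ⟨j, hj, rfl⟩ := Finset.mem_image.mp ha
      have : j ∉ Finset.univ.filter (fun i => h i < ⟪w i, x⟫) := fun hmem =>
        absurd (Finset.mem_filter.mp hmem).2 (not_lt.mpr (hxm j hj).le)
      exact Finset.mem_union_right _ (Finset.mem_image_of_mem Sum.inr (Finset.mem_compl.mpr this))
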